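/- Let n ≥ 1 be an integer and m > 0 with m+n−2 > 0. Let a₀, a₁, …, aₙ, a_{n+1} be real numbers with a₀ > 0 and a₀² − a_{n+1}² > Σ_{i=1}^n aᵢ², write a = (a₁, …, aₙ) ∈ ℝⁿ, and set u(x) = a₀·(1+|x|²)/2 + ⟨a, x⟩ + a_{n+1}·(1−|x|²)/2, a positive function on ℝⁿ. Then the function w = u^{−(m+n−2)/2} satisfies, at every point of ℝⁿ, −Δw = [(m+n)(m+n−2)(a₀² − a_{n+1}² − |a|²)/4]·w^{(m+n+2)/(m+n−2)} − [m(m+n−2)(a₀ − a_{n+1})/2]·w^{(m+n)/(m+n−2)}, and both bracketed coefficients are positive. -/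

import Mathlib

open MeasureTheory
open scoped RealInnerProductSpace

noncomputable section

/-- The Euclidean Laplacian `Δf = Σᵢ ∂²f/∂xᵢ²`. -/
def lapl {n : ℕ} (f : EuclideanSpace ℝ (Fin n) → ℝ) (x : EuclideanSpace ℝ (Fin n)) : ℝ :=
  ∑ i, iteratedFDeriv ℝ 2 f x ![EuclideanSpace.single i 1, EuclideanSpace.single i 1]

/-- helper -/
lemma second_dir {n : ℕ} (f : EuclideanSpace ℝ (Fin n) → ℝ)
    (F : EuclideanSpace ℝ (Fin n) → (EuclideanSpace ℝ (Fin n) →L[ℝ] ℝ))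
    (hF : ∀ y, HasFDerivAt f (F y) y) (x v : EuclideanSpace ℝ (Fin n))
    (g' : EuclideanSpace ℝ (Fin n) →L[ℝ] ℝ)
    (hg : HasFDerivAt (fun y => F y v) g' x) (hd : DifferentiableAt ℝ F x) :
    iteratedFDeriv ℝ 2 f x ![v, v] = g' v := by
  rw [iteratedFDeriv_two_apply]
  have hfd : fderiv ℝ f = F := funext fun y => (hF y).fderiv
  have h1 := fderiv_clm_apply (𝕜 := ℝ) hd (differentiableAt_const v)
  have h2 : fderiv ℝ (fun y => F y v) x = g' := hg.fderiv
  rw [h2, fderiv_fun_const] at h1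
  simp only [Pi.zero_apply, ContinuousLinearMap.comp_zero, zero_add] at h1
  show fderiv ℝ (fderiv ℝ f) x v v = g' v
  rw [hfd, h1]
  rfl


/-- `w = u^{-(m+n-2)/2}` built from a positive-definite quadratic
`u` satisfies the (k = 1) Euler–Lagrange equation of the Euclidean conformal GNS
functional, with positive coefficients. -/
theorem quadratic_gives_critical_function (n : ℕ) (hn : 1 ≤ n) (m : ℝ) (hm : 0 < m)
    (hmn : 0 < m + n - 2)
    (a₀ aN : ℝ) (a : EuclideanSpace ℝ (Fin n))
    (ha₀ : 0 < a₀) (hlen : a₀ ^ 2 - aN ^ 2 > ∑ i, a i ^ 2)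
    (u w : EuclideanSpace ℝ (Fin n) → ℝ)
    (hu : ∀ x, u x = a₀ * (1 + ‖x‖ ^ 2) / 2 + ⟪a, x⟫ + aN * (1 - ‖x‖ ^ 2) / 2)
    (hw : ∀ x, w x = u x ^ (-(m + (n : ℝ) - 2) / 2)) :
    (0 < (m + n) * (m + n - 2) * (a₀ ^ 2 - aN ^ 2 - ∑ i, a i ^ 2) / 4) ∧
    (0 < m * (m + n - 2) * (a₀ - aN) / 2) ∧
    ∀ x, -lapl w x
      = ((m + n) * (m + n - 2) * (a₀ ^ 2 - aN ^ 2 - ∑ i, a i ^ 2) / 4) *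
          w x ^ ((m + (n : ℝ) + 2) / (m + (n : ℝ) - 2))
        - (m * (m + n - 2) * (a₀ - aN) / 2) *
          w x ^ ((m + (n : ℝ)) / (m + (n : ℝ) - 2)) := by
  
  have hA0 : (0:ℝ) ≤ ∑ i, a i ^ 2 := Finset.sum_nonneg fun i _ => sq_nonneg _
  have haN1 : 0 < a₀ - aN := by nlinarith
  have haN2 : 0 < a₀ + aN := by nlinarith
  have hmn' : (0:ℝ) < m + n := by nlinarith
  have hα : (m + (n:ℝ) - 2) ≠ 0 := ne_of_gt hmn
  refine ⟨div_pos (mul_pos (mul_pos hmn' hmn) (by linarith)) (by norm_num),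
    div_pos (mul_pos (mul_pos hm hmn) haN1) (by norm_num), ?_⟩
  set c0 : ℝ := (a₀ - aN) / 2 with hc0
  set c1 : ℝ := (a₀ + aN) / 2 with hc1
  set p : ℝ := -(m + (n:ℝ) - 2) / 2 with hp
  -- inner product facts
  have hinner : ∀ x v : EuclideanSpace ℝ (Fin n), ⟪x, v⟫ = ∑ i, x i * v i := by
    intro x v
    simp [PiLp.inner_apply, RCLike.inner_apply, conj_trivial]
    exact Finset.sum_congr rfl fun i _ => mul_comm _ _
  have hna : ‖a‖ ^ 2 = ∑ i, a i ^ 2 := by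
    rw [← real_inner_self_eq_norm_sq, hinner]
    exact Finset.sum_congr rfl fun i _ => (sq (a i)).symm ▸ (pow_two (a i)).symm
  have hsingle : ∀ (y : EuclideanSpace ℝ (Fin n)) i, ⟪y, EuclideanSpace.single i (1:ℝ)⟫ = y i := by
    intro y i
    rw [hinner]
    simp [EuclideanSpace.single_apply]
  -- substitute u
  have hUeq : u = fun x => c1 + ⟪a, x⟫ + c0 * ‖x‖ ^ 2 := funext fun x => by
    rw [hu, hc0, hc1]; ring
  subst hUeq
  have hWeq : w = fun x => (c1 + ⟪a, x⟫ + c0 * ‖x‖ ^ 2) ^ p := funext fun x => by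
    rw [hw x]
  subst hWeq
  have hc0pos : 0 < c0 := by rw [hc0]; linarith
  -- positivity of the quadratic
  have hpos : ∀ x : EuclideanSpace ℝ (Fin n), 0 < c1 + ⟪a, x⟫ + c0 * ‖x‖ ^ 2 := by
    intro x
    have key : ‖c0 • x + (1/2 : ℝ) • a‖ ^ 2
        = c0^2 * ‖x‖^2 + c0 * ⟪a, x⟫ + ‖a‖^2/4 := by
      rw [norm_add_sq_real, real_inner_smul_left, real_inner_smul_right, norm_smul, norm_smul,
        real_inner_comm]
      simp [abs_of_pos hc0pos, mul_pow]
      ring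
    have h4 : 4 * (c0 * c1) = a₀^2 - aN^2 := by rw [hc0, hc1]; ring
    nlinarith [sq_nonneg ‖c0 • x + (1/2 : ℝ) • a‖, key, hna, hlen, hc0pos, h4]
  -- first derivative data
  set D : EuclideanSpace ℝ (Fin n) → (EuclideanSpace ℝ (Fin n) →L[ℝ] ℝ) :=
    fun y => innerSL ℝ a + c0 • ((2:ℕ) • innerSL ℝ y) with hD
  have hDapp : ∀ y v : EuclideanSpace ℝ (Fin n), D y v = ⟪a, v⟫ + 2 * c0 * ⟪y, v⟫ := by
    intro y v; simp [hD, smul_smul]; ring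
  have hU : ∀ y, HasFDerivAt (fun x : EuclideanSpace ℝ (Fin n) => c1 + ⟪a, x⟫ + c0 * ‖x‖ ^ 2)
      (D y) y := fun y =>
    ((innerSL ℝ a).hasFDerivAt.const_add c1).add
      (((hasStrictFDerivAt_norm_sq y).hasFDerivAt).const_mul c0)
  have hw'd : ∀ y, HasFDerivAt (fun x => (c1 + ⟪a, x⟫ + c0 * ‖x‖ ^ 2) ^ p)
      ((p * (c1 + ⟪a, y⟫ + c0 * ‖y‖ ^ 2) ^ (p - 1)) • D y) y := fun y =>
    (hU y).rpow_const (Or.inl (hpos y).ne')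
  have hUc : ContDiff ℝ 2 (fun x : EuclideanSpace ℝ (Fin n) => c1 + ⟪a, x⟫ + c0 * ‖x‖ ^ 2) :=
    (contDiff_const.add (ContDiff.inner ℝ contDiff_const contDiff_id)).add
      (contDiff_const.mul (contDiff_norm_sq ℝ))
  have hwC : ContDiff ℝ 2 (fun x => (c1 + ⟪a, x⟫ + c0 * ‖x‖ ^ 2) ^ p) :=
    contDiff_iff_contDiffAt.2 fun y =>
      by have h := (Real.contDiffAt_rpow_const_of_ne (p := p) (n := 2) (hpos y).ne').comp y hUc.contDiffAt; exact h
  have hfdeq : fderiv ℝ (fun x => (c1 + ⟪a, x⟫ + c0 * ‖x‖ ^ 2) ^ p)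
      = fun y => (p * (c1 + ⟪a, y⟫ + c0 * ‖y‖ ^ 2) ^ (p - 1)) • D y :=
    funext fun y => (hw'd y).fderiv
  have hd1 : ContDiff ℝ 1 (fun y => (p * (c1 + ⟪a, y⟫ + c0 * ‖y‖ ^ 2) ^ (p - 1)) • D y) :=
    hfdeq ▸ hwC.fderiv_right (le_refl _)
  intro x
  have hx := hpos x
  have key : ∀ i, iteratedFDeriv ℝ 2 (fun x => (c1 + ⟪a, x⟫ + c0 * ‖x‖ ^ 2) ^ p) x
      ![EuclideanSpace.single i 1, EuclideanSpace.single i 1]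
      = 2 * c0 * p * (c1 + ⟪a, x⟫ + c0 * ‖x‖ ^ 2) ^ (p - 1)
        + p * (p - 1) * (c1 + ⟪a, x⟫ + c0 * ‖x‖ ^ 2) ^ (p - 2) * (a i + 2 * c0 * x i) ^ 2 := by
    intro i
    set v := EuclideanSpace.single i (1:ℝ) with hv
    have hf2 : HasFDerivAt (fun y : EuclideanSpace ℝ (Fin n) => D y v)
        ((2 * c0) • innerSL ℝ v) x := by
      have base : HasFDerivAt (fun y : EuclideanSpace ℝ (Fin n) => ⟪a, v⟫ + 2 * c0 * (innerSL ℝ v) y)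
          ((2 * c0) • innerSL ℝ v) x := ((innerSL ℝ v).hasFDerivAt.const_mul (2 * c0)).const_add _
      exact base.congr_of_eventuallyEq (Filter.Eventually.of_forall fun y => by
        show D y v = _
        rw [hDapp, real_inner_comm v y]
        rfl)
    have hf1 : HasFDerivAt (fun y => p * (c1 + ⟪a, y⟫ + c0 * ‖y‖ ^ 2) ^ (p - 1))
        (p • (((p - 1) * (c1 + ⟪a, x⟫ + c0 * ‖x‖ ^ 2) ^ (p - 1 - 1)) • D x)) x :=
      ((hU x).rpow_const (Or.inl hx.ne')).const_mul p
    have hg := hf1.mul hf2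
    have hval := second_dir _ _ hw'd x v _ hg (hd1.differentiable one_ne_zero x)
    rw [hval]
    have hvv : ⟪v, v⟫ = (1:ℝ) := by rw [hsingle v i, hv]; simp [EuclideanSpace.single_apply]
    have hDxv : D x v = a i + 2 * c0 * x i := by rw [hDapp, hsingle x i, hsingle a i]
    simp only [ContinuousLinearMap.add_apply, ContinuousLinearMap.smul_apply, smul_eq_mul,
      innerSL_apply_apply, hvv, hDxv]
    rw [show p - 1 - 1 = p - 2 by ring]
    ring
  have hnormx : ‖x‖ ^ 2 = ∑ i, x i ^ 2 := by
    rw [← real_inner_self_eq_norm_sq, hinner]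
    exact Finset.sum_congr rfl fun i _ => (pow_two (x i)).symm
  have hsum : ∑ i, (a i + 2 * c0 * x i) ^ 2
      = (∑ i, a i ^ 2) + 4 * c0 * (⟪a, x⟫ + c0 * ‖x‖ ^ 2) := by
    rw [Finset.sum_congr rfl (fun i (_ : i ∈ Finset.univ) => show (a i + 2 * c0 * x i) ^ 2
        = a i ^ 2 + (4 * c0) * (a i * x i) + (4 * c0 ^ 2) * (x i ^ 2) by ring),
      Finset.sum_add_distrib, Finset.sum_add_distrib, ← Finset.mul_sum, ← Finset.mul_sum,
      hinner a x, hnormx]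
    ring
  have e1 : ((c1 + ⟪a, x⟫ + c0 * ‖x‖ ^ 2) ^ p) ^ ((m + (n:ℝ) + 2) / (m + (n:ℝ) - 2))
      = (c1 + ⟪a, x⟫ + c0 * ‖x‖ ^ 2) ^ (p - 2) := by
    rw [← Real.rpow_mul hx.le]
    congr 1
    rw [hp]; field_simp; ring
  have e2 : ((c1 + ⟪a, x⟫ + c0 * ‖x‖ ^ 2) ^ p) ^ ((m + (n:ℝ)) / (m + (n:ℝ) - 2))
      = (c1 + ⟪a, x⟫ + c0 * ‖x‖ ^ 2) ^ (p - 1) := by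
    rw [← Real.rpow_mul hx.le]
    congr 1
    rw [hp]; field_simp; ring
  have e3 : (c1 + ⟪a, x⟫ + c0 * ‖x‖ ^ 2) ^ (p - 1)
      = (c1 + ⟪a, x⟫ + c0 * ‖x‖ ^ 2) ^ (p - 2) * (c1 + ⟪a, x⟫ + c0 * ‖x‖ ^ 2) := by
    rw [show p - 1 = (p - 2) + 1 by ring, Real.rpow_add hx, Real.rpow_one]
  simp only [lapl]
  rw [Finset.sum_congr rfl fun i _ => key i, Finset.sum_add_distrib, Finset.sum_const,
    Finset.card_univ, Fintype.card_fin, ← Finset.mul_sum, hsum, e3, nsmul_eq_mul]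
  rw [e1, e2, e3, hp, hc0, hc1]
  ring
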